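/- The Jacobians of the graphs G₁ and G₂ are both cyclic of order 24: Jac(G₁) ≅ ℤ/24ℤ and Jac(G₂) ≅ ℤ/24ℤ. In particular, Jac(G₁) and Jac(G₂) are isomorphic as abelian groups. -/

import Mathlib

open scoped Classical

namespace BNGraph

variable {V : Type} [Fintype V]

/-- The degree of a divisor `D : V → ℤ`: the sum of its values. -/
def degSum (D : V → ℤ) : ℤ := ∑ v, D v

/-- A divisor is effective if all its values are nonnegative. -/
def Effective (D : V → ℤ) : Prop := ∀ v, 0 ≤ D v

/-- The combinatorial Laplacian of a graph, as a homomorphism on divisors. -/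
noncomputable def lap (G : SimpleGraph V) : (V → ℤ) →+ (V → ℤ) where
  toFun f := fun v => (G.degree v : ℤ) * f v - ∑ w ∈ G.neighborFinset v, f w
  map_zero' := by
    funext v; simp
  map_add' f g := by
    funext v
    simp only [Pi.add_apply, Finset.sum_add_distrib]
    ring

/-- The subgroup of principal divisors: the image of the Laplacian. -/
noncomputable def Principal (G : SimpleGraph V) : AddSubgroup (V → ℤ) := (lap G).range

/-- Linear equivalence of divisors. -/
def LinEquiv (G : SimpleGraph V) (D D' : V → ℤ) : Prop := D - D' ∈ Principal G

/-- A divisor is winnable if it is linearly equivalent to an effective divisor. -/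
def Winnable (G : SimpleGraph V) (D : V → ℤ) : Prop :=
  ∃ E : V → ℤ, Effective E ∧ LinEquiv G D E

/-- The Baker–Norine rank of a divisor: the largest `r ≥ 0` such that `D - E` is
winnable for every effective divisor `E` of degree `r`, or `-1` if there is no such `r`
(equivalently, if `D` itself is not winnable). -/
noncomputable def bnRank (G : SimpleGraph V) (D : V → ℤ) : ℤ :=
  sSup {r : ℤ | r = -1 ∨ (0 ≤ r ∧
    ∀ E : V → ℤ, Effective E → degSum E = r → Winnable G (D - E))}

/-- The Picard group of a graph: divisors modulo principal divisors. -/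
abbrev Pic (G : SimpleGraph V) : Type _ := (V → ℤ) ⧸ Principal G

/-- The number of divisor classes of degree `d` and Baker–Norine rank `r`. -/
noncomputable def numClasses (G : SimpleGraph V) (d r : ℤ) : ℕ :=
  Set.ncard {c : Pic G | ∃ D : V → ℤ,
    QuotientAddGroup.mk' (Principal G) D = c ∧ degSum D = d ∧ bnRank G D = r}

/-- Two graphs have the same two-variable zeta function iff for every degree `d` and
rank `r` they have the same number of divisor classes of degree `d` and rank `r`. -/
def SameZeta {W : Type} [Fintype W] (G : SimpleGraph V) (G' : SimpleGraph W) : Prop :=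
  ∀ d r : ℤ, numClasses G d r = numClasses G' d r

/-- Degree as a homomorphism on divisors. -/
def degHom : (V → ℤ) →+ ℤ where
  toFun := degSum
  map_zero' := by simp [degSum]
  map_add' f g := by simp [degSum, Finset.sum_add_distrib]

/-- The subgroup of divisors of degree zero. -/
def Deg0 (V : Type) [Fintype V] : AddSubgroup (V → ℤ) := (degHom (V := V)).ker

/-- The Jacobian of a graph: divisor classes of degree zero. -/
noncomputable abbrev Jac (G : SimpleGraph V) : Type _ :=
  Deg0 V ⧸ ((Principal G).addSubgroupOf (Deg0 V))

/-- The number of connected components of the spanning subgraph with edge set `A`. -/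
noncomputable def numComponents (V : Type) [Fintype V] (A : Set (Sym2 V)) : ℕ :=
  Nat.card (SimpleGraph.fromEdgeSet A).ConnectedComponent

/-- The number of edges of a graph. -/
noncomputable def edgeCount (G : SimpleGraph V) : ℕ := Nat.card G.edgeSet

open MvPolynomial in
/-- The Tutte polynomial of `G`, as a polynomial in `ℤ[x, y]` with `x = X 0`, `y = X 1`:
`T_G(x,y) = Σ_{A ⊆ E(G)} (x−1)^(c(A)−c(E(G))) (y−1)^(c(A)+|A|−|V(G)|)`. -/
noncomputable def tutte (G : SimpleGraph V) : MvPolynomial (Fin 2) ℤ :=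
  ∑ A ∈ G.edgeFinset.powerset,
    (X 0 - 1) ^ (numComponents V ↑A - numComponents V G.edgeSet) *
    (X 1 - 1) ^ (numComponents V ↑A + A.card - Fintype.card V)


/-- `G₁`: the diamond graph (`K₄` minus an edge) on vertices `0,1,2,3`
(with `u = 0`, `v = 1` of degree 3 and `x = 2`, `y = 3` of degree 2),
with a triangle `0,4,5` attached at the vertex `u = 0`. -/
def G1 : SimpleGraph (Fin 6) :=
  SimpleGraph.fromEdgeSet
    {s(0,1), s(0,2), s(0,3), s(1,2), s(1,3), s(0,4), s(0,5), s(4,5)}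

/-- `G₂`: the diamond graph (`K₄` minus an edge) on vertices `0,1,2,3`
(with `u = 0`, `v = 1` of degree 3 and `x = 2`, `y = 3` of degree 2),
with a triangle `2,4,5` attached at the vertex `x = 2`. -/
def G2 : SimpleGraph (Fin 6) :=
  SimpleGraph.fromEdgeSet
    {s(0,1), s(0,2), s(0,3), s(1,2), s(1,3), s(2,4), s(2,5), s(4,5)}


section Helper

lemma jac_equiv_of (G : SimpleGraph V) (n : ℕ) [NeZero n]
    (χ : (V → ℤ) →+ ZMod n)
    (hprin : ∀ f : V → ℤ, χ (lap G f) = 0)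
    (hone : ∃ D : V → ℤ, degSum D = 0 ∧ χ D = 1)
    (hker : ∀ D : V → ℤ, degSum D = 0 → χ D = 0 → D ∈ Principal G) :
    Nonempty (Jac G ≃+ ZMod n) := by
  have hle : (Principal G).addSubgroupOf (Deg0 V) ≤
      (χ.comp (Deg0 V).subtype).ker := by
    rintro ⟨D, hD⟩ h
    rw [AddSubgroup.mem_addSubgroupOf] at h
    obtain ⟨f, hf⟩ := h
    have hf' : (lap G) f = D := hf
    rw [AddMonoidHom.mem_ker]
    show χ D = 0
    rw [← hf']
    exact hprin f
  let φ : Jac G →+ ZMod n := QuotientAddGroup.lift _ (χ.comp (Deg0 V).subtype) hle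
  have hinj : Function.Injective φ := by
    rw [injective_iff_map_eq_zero]
    intro a ha
    obtain ⟨x, rfl⟩ := QuotientAddGroup.mk_surjective a
    have hdx : degSum (x : V → ℤ) = 0 := x.2
    have hx : (x : V → ℤ) ∈ Principal G := by
      refine hker _ hdx ?_
      simpa [φ, QuotientAddGroup.lift_mk] using ha
    rw [QuotientAddGroup.eq_zero_iff]
    exact AddSubgroup.mem_addSubgroupOf.mpr hx
  have hsur : Function.Surjective φ := by
    intro y
    obtain ⟨D, hdeg, hχ⟩ := hone
    obtain ⟨z, rfl⟩ := ZMod.intCast_surjective (n := n) y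
    have hmem : z • D ∈ Deg0 V := by
      have : degSum (z • D) = z • degSum D := map_zsmul (degHom (V := V)) z D
      show z • D ∈ (degHom (V := V)).ker
      rw [AddMonoidHom.mem_ker]
      show degSum (z • D) = 0
      rw [this, hdeg, smul_zero]
    refine ⟨QuotientAddGroup.mk ⟨z • D, hmem⟩, ?_⟩
    show χ (z • D) = (z : ZMod n)
    rw [map_zsmul, hχ, zsmul_one]
  exact ⟨AddEquiv.ofBijective φ ⟨hinj, hsur⟩⟩

end Helper

lemma nG1_0 : G1.neighborFinset 0 = {1,2,3,4,5} := by
  ext w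
  rw [SimpleGraph.mem_neighborFinset]
  simp only [SimpleGraph.mem_neighborFinset, G1, SimpleGraph.fromEdgeSet_adj,
    Set.mem_insert_iff, Set.mem_singleton_iff, Sym2.eq_iff]
  fin_cases w <;> decide

lemma nG1_1 : G1.neighborFinset 1 = {0,2,3} := by
  ext w
  rw [SimpleGraph.mem_neighborFinset]
  simp only [SimpleGraph.mem_neighborFinset, G1, SimpleGraph.fromEdgeSet_adj,
    Set.mem_insert_iff, Set.mem_singleton_iff, Sym2.eq_iff]
  fin_cases w <;> decide

lemma nG1_2 : G1.neighborFinset 2 = {0,1} := by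
  ext w
  rw [SimpleGraph.mem_neighborFinset]
  simp only [SimpleGraph.mem_neighborFinset, G1, SimpleGraph.fromEdgeSet_adj,
    Set.mem_insert_iff, Set.mem_singleton_iff, Sym2.eq_iff]
  fin_cases w <;> decide

lemma nG1_3 : G1.neighborFinset 3 = {0,1} := by
  ext w
  rw [SimpleGraph.mem_neighborFinset]
  simp only [SimpleGraph.mem_neighborFinset, G1, SimpleGraph.fromEdgeSet_adj,
    Set.mem_insert_iff, Set.mem_singleton_iff, Sym2.eq_iff]
  fin_cases w <;> decide

lemma nG1_4 : G1.neighborFinset 4 = {0,5} := by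
  ext w
  rw [SimpleGraph.mem_neighborFinset]
  simp only [SimpleGraph.mem_neighborFinset, G1, SimpleGraph.fromEdgeSet_adj,
    Set.mem_insert_iff, Set.mem_singleton_iff, Sym2.eq_iff]
  fin_cases w <;> decide

lemma nG1_5 : G1.neighborFinset 5 = {0,4} := by
  ext w
  rw [SimpleGraph.mem_neighborFinset]
  simp only [SimpleGraph.mem_neighborFinset, G1, SimpleGraph.fromEdgeSet_adj,
    Set.mem_insert_iff, Set.mem_singleton_iff, Sym2.eq_iff]
  fin_cases w <;> decide

lemma lapG1_0 (f : Fin 6 → ℤ) : lap G1 f 0 = 5 * f 0 - (f 1 + f 2 + f 3 + f 4 + f 5) := by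
  show (G1.degree 0 : ℤ) * f 0 - ∑ w ∈ G1.neighborFinset 0, f w = _
  rw [SimpleGraph.degree, nG1_0]
  simp [Finset.sum_insert, Finset.mem_insert]
  try ring

lemma lapG1_1 (f : Fin 6 → ℤ) : lap G1 f 1 = 3 * f 1 - (f 0 + f 2 + f 3) := by
  show (G1.degree 1 : ℤ) * f 1 - ∑ w ∈ G1.neighborFinset 1, f w = _
  rw [SimpleGraph.degree, nG1_1]
  simp [Finset.sum_insert, Finset.mem_insert]
  try ring

lemma lapG1_2 (f : Fin 6 → ℤ) : lap G1 f 2 = 2 * f 2 - (f 0 + f 1) := by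
  show (G1.degree 2 : ℤ) * f 2 - ∑ w ∈ G1.neighborFinset 2, f w = _
  rw [SimpleGraph.degree, nG1_2]
  simp [Finset.sum_insert, Finset.mem_insert]
  try ring

lemma lapG1_3 (f : Fin 6 → ℤ) : lap G1 f 3 = 2 * f 3 - (f 0 + f 1) := by
  show (G1.degree 3 : ℤ) * f 3 - ∑ w ∈ G1.neighborFinset 3, f w = _
  rw [SimpleGraph.degree, nG1_3]
  simp [Finset.sum_insert, Finset.mem_insert]
  try ring

lemma lapG1_4 (f : Fin 6 → ℤ) : lap G1 f 4 = 2 * f 4 - (f 0 + f 5) := by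
  show (G1.degree 4 : ℤ) * f 4 - ∑ w ∈ G1.neighborFinset 4, f w = _
  rw [SimpleGraph.degree, nG1_4]
  simp [Finset.sum_insert, Finset.mem_insert]
  try ring

lemma lapG1_5 (f : Fin 6 → ℤ) : lap G1 f 5 = 2 * f 5 - (f 0 + f 4) := by
  show (G1.degree 5 : ℤ) * f 5 - ∑ w ∈ G1.neighborFinset 5, f w = _
  rw [SimpleGraph.degree, nG1_5]
  simp [Finset.sum_insert, Finset.mem_insert]
  try ring

noncomputable def chi1 : (Fin 6 → ℤ) →+ ZMod 24 where
  toFun D := ((16 * D 0 - 14 * D 1 - 59 * D 2 + D 3 + 8 * D 4 : ℤ) : ZMod 24)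
  map_zero' := by norm_num
  map_add' f g := by
    simp only [Pi.add_apply]
    push_cast
    ring

lemma chi1_lap (f : Fin 6 → ℤ) : chi1 (lap G1 f) = 0 := by
  show ((16 * (lap G1 f) 0 - 14 * (lap G1 f) 1 - 59 * (lap G1 f) 2 + (lap G1 f) 3 + 8 * (lap G1 f) 4 : ℤ) : ZMod 24) = 0
  rw [ZMod.intCast_zmod_eq_zero_iff_dvd]
  exact ⟨6 * f 0 - 5 * f 2 - f 5, by rw [lapG1_0, lapG1_1, lapG1_2, lapG1_3, lapG1_4]; ring⟩

lemma chi1_ker (D : Fin 6 → ℤ) (h0 : degSum D = 0) (hc : chi1 D = 0) :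
    D ∈ Principal G1 := by
  have hdeg : D 0 + D 1 + D 2 + D 3 + D 4 + D 5 = 0 := by
    rw [degSum, Fin.sum_univ_six] at h0; linarith
  have hc' : ((16 * D 0 - 14 * D 1 - 59 * D 2 + D 3 + 8 * D 4 : ℤ) : ZMod 24) = 0 := hc
  obtain ⟨k, hk0⟩ := (ZMod.intCast_zmod_eq_zero_iff_dvd _ 24).mp hc'
  have hk : (16 * D 0 - 14 * D 1 - 59 * D 2 + D 3 + 8 * D 4 : ℤ) = 24 * k := by exact_mod_cast hk0
  refine ⟨![0, -4 * D 0 + 4 * D 1 + 15 * D 2 - 2 * D 4 + 6 * k, -2 * D 0 + 2 * D 1 + 8 * D 2 - D 4 + 3 * k, -10 * D 0 + 9 * D 1 + 37 * D 2 - 5 * D 4 + 15 * k, 5 * D 0 - 5 * D 1 - 20 * D 2 + 3 * D 4 - 8 * k, 10 * D 0 - 10 * D 1 - 40 * D 2 + 5 * D 4 - 16 * k], ?_⟩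
  funext v
  fin_cases v
  · show lap G1 _ (0 : Fin 6) = D 0
    rw [lapG1_0]
    show 5 * (0) - ((-4 * D 0 + 4 * D 1 + 15 * D 2 - 2 * D 4 + 6 * k) + (-2 * D 0 + 2 * D 1 + 8 * D 2 - D 4 + 3 * k) + (-10 * D 0 + 9 * D 1 + 37 * D 2 - 5 * D 4 + 15 * k) + (5 * D 0 - 5 * D 1 - 20 * D 2 + 3 * D 4 - 8 * k) + (10 * D 0 - 10 * D 1 - 40 * D 2 + 5 * D 4 - 16 * k)) = D 0
    linear_combination (0 : ℤ) * hdeg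
  · show lap G1 _ (1 : Fin 6) = D 1
    rw [lapG1_1]
    show 3 * (-4 * D 0 + 4 * D 1 + 15 * D 2 - 2 * D 4 + 6 * k) - ((0) + (-2 * D 0 + 2 * D 1 + 8 * D 2 - D 4 + 3 * k) + (-10 * D 0 + 9 * D 1 + 37 * D 2 - 5 * D 4 + 15 * k)) = D 1
    linear_combination (0 : ℤ) * hdeg
  · show lap G1 _ (2 : Fin 6) = D 2
    rw [lapG1_2]
    show 2 * (-2 * D 0 + 2 * D 1 + 8 * D 2 - D 4 + 3 * k) - ((0) + (-4 * D 0 + 4 * D 1 + 15 * D 2 - 2 * D 4 + 6 * k)) = D 2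
    linear_combination (0 : ℤ) * hdeg
  · show lap G1 _ (3 : Fin 6) = D 3
    rw [lapG1_3]
    show 2 * (-10 * D 0 + 9 * D 1 + 37 * D 2 - 5 * D 4 + 15 * k) - ((0) + (-4 * D 0 + 4 * D 1 + 15 * D 2 - 2 * D 4 + 6 * k)) = D 3
    linear_combination (-1 : ℤ) * hk
  · show lap G1 _ (4 : Fin 6) = D 4
    rw [lapG1_4]
    show 2 * (5 * D 0 - 5 * D 1 - 20 * D 2 + 3 * D 4 - 8 * k) - ((0) + (10 * D 0 - 10 * D 1 - 40 * D 2 + 5 * D 4 - 16 * k)) = D 4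
    linear_combination (0 : ℤ) * hdeg
  · show lap G1 _ (5 : Fin 6) = D 5
    rw [lapG1_5]
    show 2 * (10 * D 0 - 10 * D 1 - 40 * D 2 + 5 * D 4 - 16 * k) - ((0) + (5 * D 0 - 5 * D 1 - 20 * D 2 + 3 * D 4 - 8 * k)) = D 5
    linear_combination (-1 : ℤ) * hdeg + (1 : ℤ) * hk

lemma chi1_one : ∃ D : Fin 6 → ℤ, degSum D = 0 ∧ chi1 D = 1 := by
  refine ⟨![0, 0, 0, 1, 0, -1], ?_, ?_⟩
  · rw [degSum, Fin.sum_univ_six]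
    decide
  · decide

lemma nG2_0 : G2.neighborFinset 0 = {1,2,3} := by
  ext w
  rw [SimpleGraph.mem_neighborFinset]
  simp only [SimpleGraph.mem_neighborFinset, G2, SimpleGraph.fromEdgeSet_adj,
    Set.mem_insert_iff, Set.mem_singleton_iff, Sym2.eq_iff]
  fin_cases w <;> decide

lemma nG2_1 : G2.neighborFinset 1 = {0,2,3} := by
  ext w
  rw [SimpleGraph.mem_neighborFinset]
  simp only [SimpleGraph.mem_neighborFinset, G2, SimpleGraph.fromEdgeSet_adj,
    Set.mem_insert_iff, Set.mem_singleton_iff, Sym2.eq_iff]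
  fin_cases w <;> decide

lemma nG2_2 : G2.neighborFinset 2 = {0,1,4,5} := by
  ext w
  rw [SimpleGraph.mem_neighborFinset]
  simp only [SimpleGraph.mem_neighborFinset, G2, SimpleGraph.fromEdgeSet_adj,
    Set.mem_insert_iff, Set.mem_singleton_iff, Sym2.eq_iff]
  fin_cases w <;> decide

lemma nG2_3 : G2.neighborFinset 3 = {0,1} := by
  ext w
  rw [SimpleGraph.mem_neighborFinset]
  simp only [SimpleGraph.mem_neighborFinset, G2, SimpleGraph.fromEdgeSet_adj,
    Set.mem_insert_iff, Set.mem_singleton_iff, Sym2.eq_iff]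
  fin_cases w <;> decide

lemma nG2_4 : G2.neighborFinset 4 = {2,5} := by
  ext w
  rw [SimpleGraph.mem_neighborFinset]
  simp only [SimpleGraph.mem_neighborFinset, G2, SimpleGraph.fromEdgeSet_adj,
    Set.mem_insert_iff, Set.mem_singleton_iff, Sym2.eq_iff]
  fin_cases w <;> decide

lemma nG2_5 : G2.neighborFinset 5 = {2,4} := by
  ext w
  rw [SimpleGraph.mem_neighborFinset]
  simp only [SimpleGraph.mem_neighborFinset, G2, SimpleGraph.fromEdgeSet_adj,
    Set.mem_insert_iff, Set.mem_singleton_iff, Sym2.eq_iff]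
  fin_cases w <;> decide

lemma lapG2_0 (f : Fin 6 → ℤ) : lap G2 f 0 = 3 * f 0 - (f 1 + f 2 + f 3) := by
  show (G2.degree 0 : ℤ) * f 0 - ∑ w ∈ G2.neighborFinset 0, f w = _
  rw [SimpleGraph.degree, nG2_0]
  simp [Finset.sum_insert, Finset.mem_insert]
  try ring

lemma lapG2_1 (f : Fin 6 → ℤ) : lap G2 f 1 = 3 * f 1 - (f 0 + f 2 + f 3) := by
  show (G2.degree 1 : ℤ) * f 1 - ∑ w ∈ G2.neighborFinset 1, f w = _
  rw [SimpleGraph.degree, nG2_1]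
  simp [Finset.sum_insert, Finset.mem_insert]
  try ring

lemma lapG2_2 (f : Fin 6 → ℤ) : lap G2 f 2 = 4 * f 2 - (f 0 + f 1 + f 4 + f 5) := by
  show (G2.degree 2 : ℤ) * f 2 - ∑ w ∈ G2.neighborFinset 2, f w = _
  rw [SimpleGraph.degree, nG2_2]
  simp [Finset.sum_insert, Finset.mem_insert]
  try ring

lemma lapG2_3 (f : Fin 6 → ℤ) : lap G2 f 3 = 2 * f 3 - (f 0 + f 1) := by
  show (G2.degree 3 : ℤ) * f 3 - ∑ w ∈ G2.neighborFinset 3, f w = _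
  rw [SimpleGraph.degree, nG2_3]
  simp [Finset.sum_insert, Finset.mem_insert]
  try ring

lemma lapG2_4 (f : Fin 6 → ℤ) : lap G2 f 4 = 2 * f 4 - (f 2 + f 5) := by
  show (G2.degree 4 : ℤ) * f 4 - ∑ w ∈ G2.neighborFinset 4, f w = _
  rw [SimpleGraph.degree, nG2_4]
  simp [Finset.sum_insert, Finset.mem_insert]
  try ring

lemma lapG2_5 (f : Fin 6 → ℤ) : lap G2 f 5 = 2 * f 5 - (f 2 + f 4) := by
  show (G2.degree 5 : ℤ) * f 5 - ∑ w ∈ G2.neighborFinset 5, f w = _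
  rw [SimpleGraph.degree, nG2_5]
  simp [Finset.sum_insert, Finset.mem_insert]
  try ring

noncomputable def chi2 : (Fin 6 → ℤ) →+ ZMod 24 where
  toFun D := ((-3 * D 0 + 3 * D 1 + 12 * D 2 + 20 * D 4 + 28 * D 5 : ℤ) : ZMod 24)
  map_zero' := by norm_num
  map_add' f g := by
    simp only [Pi.add_apply]
    push_cast
    ring

lemma chi2_lap (f : Fin 6 → ℤ) : chi2 (lap G2 f) = 0 := by
  show ((-3 * (lap G2 f) 0 + 3 * (lap G2 f) 1 + 12 * (lap G2 f) 2 + 20 * (lap G2 f) 4 + 28 * (lap G2 f) 5 : ℤ) : ZMod 24) = 0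
  rw [ZMod.intCast_zmod_eq_zero_iff_dvd]
  exact ⟨-f 0 + f 5, by rw [lapG2_0, lapG2_1, lapG2_2, lapG2_4, lapG2_5]; ring⟩

lemma chi2_ker (D : Fin 6 → ℤ) (h0 : degSum D = 0) (hc : chi2 D = 0) :
    D ∈ Principal G2 := by
  have hdeg : D 0 + D 1 + D 2 + D 3 + D 4 + D 5 = 0 := by
    rw [degSum, Fin.sum_univ_six] at h0; linarith
  have hc' : ((-3 * D 0 + 3 * D 1 + 12 * D 2 + 20 * D 4 + 28 * D 5 : ℤ) : ZMod 24) = 0 := hc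
  obtain ⟨k, hk0⟩ := (ZMod.intCast_zmod_eq_zero_iff_dvd _ 24).mp hc'
  have hk : (-3 * D 0 + 3 * D 1 + 12 * D 2 + 20 * D 4 + 28 * D 5 : ℤ) = 24 * k := by exact_mod_cast hk0
  refine ⟨![-k, -98 * D 0 + 84 * D 1 + 356 * D 2 - 7 * D 3 + 598 * D 4 + 840 * D 5 - 727 * k, -28 * D 0 + 24 * D 1 + 102 * D 2 - 2 * D 3 + 171 * D 4 + 240 * D 5 - 208 * k, 125 * D 0 - 108 * D 1 - 458 * D 2 + 9 * D 3 - 769 * D 4 - 1080 * D 5 + 932 * k, -14 * D 0 + 12 * D 1 + 51 * D 2 - D 3 + 86 * D 4 + 120 * D 5 - 104 * k, 0], ?_⟩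
  funext v
  fin_cases v
  · show lap G2 _ (0 : Fin 6) = D 0
    rw [lapG2_0]
    show 3 * (-k) - ((-98 * D 0 + 84 * D 1 + 356 * D 2 - 7 * D 3 + 598 * D 4 + 840 * D 5 - 727 * k) + (-28 * D 0 + 24 * D 1 + 102 * D 2 - 2 * D 3 + 171 * D 4 + 240 * D 5 - 208 * k) + (125 * D 0 - 108 * D 1 - 458 * D 2 + 9 * D 3 - 769 * D 4 - 1080 * D 5 + 932 * k)) = D 0
    linear_combination (0 : ℤ) * hdeg
  · show lap G2 _ (1 : Fin 6) = D 1
    rw [lapG2_1]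
    show 3 * (-98 * D 0 + 84 * D 1 + 356 * D 2 - 7 * D 3 + 598 * D 4 + 840 * D 5 - 727 * k) - ((-k) + (-28 * D 0 + 24 * D 1 + 102 * D 2 - 2 * D 3 + 171 * D 4 + 240 * D 5 - 208 * k) + (125 * D 0 - 108 * D 1 - 458 * D 2 + 9 * D 3 - 769 * D 4 - 1080 * D 5 + 932 * k)) = D 1
    linear_combination (-28 : ℤ) * hdeg + (121 : ℤ) * hk
  · show lap G2 _ (2 : Fin 6) = D 2
    rw [lapG2_2]
    show 4 * (-28 * D 0 + 24 * D 1 + 102 * D 2 - 2 * D 3 + 171 * D 4 + 240 * D 5 - 208 * k) - ((-k) + (-98 * D 0 + 84 * D 1 + 356 * D 2 - 7 * D 3 + 598 * D 4 + 840 * D 5 - 727 * k) + (-14 * D 0 + 12 * D 1 + 51 * D 2 - D 3 + 86 * D 4 + 120 * D 5 - 104 * k) + (0)) = D 2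
    linear_combination (0 : ℤ) * hdeg
  · show lap G2 _ (3 : Fin 6) = D 3
    rw [lapG2_3]
    show 2 * (125 * D 0 - 108 * D 1 - 458 * D 2 + 9 * D 3 - 769 * D 4 - 1080 * D 5 + 932 * k) - ((-k) + (-98 * D 0 + 84 * D 1 + 356 * D 2 - 7 * D 3 + 598 * D 4 + 840 * D 5 - 727 * k)) = D 3
    linear_combination (24 : ℤ) * hdeg + (-108 : ℤ) * hk
  · show lap G2 _ (4 : Fin 6) = D 4
    rw [lapG2_4]
    show 2 * (-14 * D 0 + 12 * D 1 + 51 * D 2 - D 3 + 86 * D 4 + 120 * D 5 - 104 * k) - ((-28 * D 0 + 24 * D 1 + 102 * D 2 - 2 * D 3 + 171 * D 4 + 240 * D 5 - 208 * k) + (0)) = D 4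
    linear_combination (0 : ℤ) * hdeg
  · show lap G2 _ (5 : Fin 6) = D 5
    rw [lapG2_5]
    show 2 * (0) - ((-28 * D 0 + 24 * D 1 + 102 * D 2 - 2 * D 3 + 171 * D 4 + 240 * D 5 - 208 * k) + (-14 * D 0 + 12 * D 1 + 51 * D 2 - D 3 + 86 * D 4 + 120 * D 5 - 104 * k)) = D 5
    linear_combination (3 : ℤ) * hdeg + (-13 : ℤ) * hk

lemma chi2_one : ∃ D : Fin 6 → ℤ, degSum D = 0 ∧ chi2 D = 1 := by
  refine ⟨![0, -1, 0, 0, 0, 1], ?_, ?_⟩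
  · rw [degSum, Fin.sum_univ_six]
    decide
  · decide


/-- The Jacobians of `G₁` and `G₂` are both cyclic of order 24; in particular they
are isomorphic as abelian groups. -/
theorem jac_G1_jac_G2_cyclic24 :
    Nonempty (Jac G1 ≃+ ZMod 24) ∧ Nonempty (Jac G2 ≃+ ZMod 24) ∧
    Nonempty (Jac G1 ≃+ Jac G2) := by
  obtain ⟨e1⟩ := jac_equiv_of G1 24 chi1 chi1_lap chi1_one chi1_ker
  obtain ⟨e2⟩ := jac_equiv_of G2 24 chi2 chi2_lap chi2_one chi2_ker
  exact ⟨⟨e1⟩, ⟨e2⟩, ⟨e1.trans e2.symm⟩⟩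

end BNGraph
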